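/- Let E be a symmetric Banach sequence space and α a bounded sequence. If Tα is the diagonal n-linear form Tα(x₁,…,xₙ) = ∑ₖ α(k)x₁(k)⋯xₙ(k) and Pα(x) = ∑ₖ α(k)x(k)^n the associated diagonal n-homogeneous polynomial, then the operator norm of Tα equals the polynomial norm of Pα: sup over ‖x₁‖,…,‖xₙ‖ ≤ 1 of |Tα(x₁,…,xₙ)| = sup over ‖x‖ ≤ 1 of |Pα(x)|. -/

import Mathlib

/-- A symmetric Banach sequence space. -/
structure SymmBSS where
  mem : (ℕ → ℂ) → Prop
  nrm : (ℕ → ℂ) → ℝ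
  nrm_nonneg : ∀ x, 0 ≤ nrm x
  solid : ∀ x y : ℕ → ℂ, (∀ k, ‖x k‖ ≤ ‖y k‖) → mem y → mem x ∧ nrm x ≤ nrm y
  symm : ∀ (x : ℕ → ℂ) (e : ℕ ≃ ℕ), mem x → mem (x ∘ e) ∧ nrm (x ∘ e) = nrm x
  add_mem : ∀ x y : ℕ → ℂ, mem x → mem y → mem (x + y) ∧ nrm (x + y) ≤ nrm x + nrm y
  smul_mem : ∀ (c : ℂ) (x : ℕ → ℂ), mem x → mem (c • x) ∧ nrm (c • x) = ‖c‖ * nrm x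
  mem_of_l1 : ∀ x : ℕ → ℂ, Summable (fun k => ‖x k‖) → mem x
  bdd_of_mem : ∀ x : ℕ → ℂ, mem x → BddAbove (Set.range fun k => ‖x k‖)

/-- For a diagonal form on a symmetric Banach sequence space, the norm of the `n`-linear form
`T_α` equals the norm of the associated diagonal `n`-homogeneous polynomial `P_α`:
`sup_{‖x₁‖,…,‖xₙ‖ ≤ 1} |T_α(x₁,…,xₙ)| = sup_{‖x‖ ≤ 1} |P_α(x)|`. -/
theorem stmt9 (E : SymmBSS) (n : ℕ) (hn : 0 < n) (α : ℕ → ℂ)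
    (hα : BddAbove (Set.range fun k => ‖α k‖))
    (hsum : ∀ x : Fin n → ℕ → ℂ, (∀ i, E.mem (x i)) →
      Summable fun k => ‖α k‖ * ∏ i, ‖x i k‖) :
    sSup {t : ℝ | ∃ x : Fin n → ℕ → ℂ, (∀ i, E.mem (x i) ∧ E.nrm (x i) ≤ 1) ∧
        t = ‖∑' k, α k * ∏ i, x i k‖}
      = sSup {t : ℝ | ∃ x : ℕ → ℂ, E.mem x ∧ E.nrm x ≤ 1 ∧
        t = ‖∑' k, α k * x k ^ n‖} := by
  set A := {t : ℝ | ∃ x : Fin n → ℕ → ℂ, (∀ i, E.mem (x i) ∧ E.nrm (x i) ≤ 1) ∧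
      t = ‖∑' k, α k * ∏ i, x i k‖} with hA_def
  set B := {t : ℝ | ∃ x : ℕ → ℂ, E.mem x ∧ E.nrm x ≤ 1 ∧
      t = ‖∑' k, α k * x k ^ n‖} with hB_def
  -- the zero sequence
  have mem0 : E.mem 0 := E.mem_of_l1 0 (by simpa using summable_zero)
  have nrm0 : E.nrm 0 = 0 := by
    have := (E.smul_mem 0 0 mem0).2
    simpa using this
  have hBne : B.Nonempty := ⟨0, 0, mem0, by rw [nrm0]; exact zero_le_one, by
    simp [zero_pow hn.ne']⟩
  have hBA : B ⊆ A := by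
    rintro t ⟨x, hm, hn1, rfl⟩
    exact ⟨fun _ => x, fun _ => ⟨hm, hn1⟩, by
      simp [Finset.prod_const, Finset.card_univ]⟩
  have hAne : A.Nonempty := hBne.mono hBA
  -- key step: every element of A is dominated by an element of B
  have key : ∀ a ∈ A, ∃ b ∈ B, a ≤ b := by
    rintro a ⟨x, hx, rfl⟩
    have hmemx : ∀ i, E.mem (x i) := fun i => (hx i).1
    -- moduli raised to 1/n
    set r : ℕ → ℝ := fun k => (∏ i, ‖x i k‖) ^ ((n : ℝ)⁻¹) with hr_def
    have hprod_nonneg : ∀ k, (0:ℝ) ≤ ∏ i, ‖x i k‖ :=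
      fun k => Finset.prod_nonneg fun i _ => norm_nonneg _
    have hr0 : ∀ k, 0 ≤ r k := fun k => Real.rpow_nonneg (hprod_nonneg k) _
    have hrn : ∀ k, r k ^ n = ∏ i, ‖x i k‖ :=
      fun k => Real.rpow_inv_natCast_pow (hprod_nonneg k) hn.ne'
    -- phases
    have hpow : ∀ k, ∃ u : ℂ, u ^ n = (if α k = 0 then 1 else (starRingEnd ℂ) (α k) / ‖α k‖) :=
      fun k => IsAlgClosed.exists_pow_nat_eq _ hn
    choose u hu using hpow
    have hu1 : ∀ k, ‖u k‖ = 1 := by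
      intro k
      have h1 : ‖u k‖ ^ n = 1 := by
        rw [← norm_pow, hu k]
        by_cases hk : α k = 0
        · simp [hk]
        · have : ‖α k‖ ≠ 0 := by simpa using hk
          simp [hk, norm_div, this]
      have := Real.pow_rpow_inv_natCast (norm_nonneg (u k)) hn.ne'
      rw [h1, Real.one_rpow] at this
      exact this.symm
    set z : ℕ → ℂ := fun k => u k * (r k : ℂ) with hz_def
    have hznorm : ∀ k, ‖z k‖ = r k := by
      intro k
      simp [hz_def, norm_mul, hu1 k, Complex.norm_real, abs_of_nonneg (hr0 k)]
    -- value of the polynomial on z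
    have hval : ∀ k, α k * z k ^ n = ((‖α k‖ * ∏ i, ‖x i k‖ : ℝ) : ℂ) := by
      intro k
      have : z k ^ n = u k ^ n * ((r k : ℂ)) ^ n := by ring
      rw [this, hu k]
      by_cases hk : α k = 0
      · simp [hk]
      · have hnz : (‖α k‖ : ℂ) ≠ 0 := by
          simpa using hk
        have hconj : α k * ((starRingEnd ℂ) (α k)) = ((‖α k‖ ^ 2 : ℝ) : ℂ) := by
          simp [Complex.mul_conj, Complex.normSq_eq_norm_sq]
        have hrc : ((r k : ℂ)) ^ n = ((∏ i, ‖x i k‖ : ℝ) : ℂ) := by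
          push_cast [← hrn k]; ring
        rw [hrc]
        rw [if_neg hk, ← mul_assoc, mul_div_assoc', hconj]
        push_cast
        field_simp
    -- membership of z in the unit ball
    have hfmem : ∀ i : Fin n, E.mem (fun k => (‖x i k‖ : ℂ)) ∧
        E.nrm (fun k => (‖x i k‖ : ℂ)) ≤ 1 := by
      intro i
      have := E.solid (fun k => (‖x i k‖ : ℂ)) (x i)
        (fun k => by simp) (hmemx i)
      exact ⟨this.1, this.2.trans (hx i).2⟩
    have hsummem : ∀ s : Finset (Fin n),
        E.mem (∑ i ∈ s, fun k => (‖x i k‖ : ℂ)) ∧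
        E.nrm (∑ i ∈ s, fun k => (‖x i k‖ : ℂ)) ≤ s.card := by
      intro s
      induction s using Finset.induction_on with
      | empty => simpa [nrm0] using mem0
      | @insert a s ha ih =>
        rw [Finset.sum_insert ha]
        have := E.add_mem _ _ (hfmem a).1 ih.1
        refine ⟨this.1, this.2.trans ?_⟩
        rw [Finset.card_insert_of_notMem ha]
        push_cast
        linarith [(hfmem a).2, ih.2]
    set y : ℕ → ℂ := (n : ℂ)⁻¹ • (∑ i, fun k => (‖x i k‖ : ℂ)) with hy_def
    have hymem : E.mem y ∧ E.nrm y ≤ 1 := by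
      have h := E.smul_mem ((n : ℂ)⁻¹) _ (hsummem Finset.univ).1
      refine ⟨h.1, h.2.le.trans ?_⟩
      have hcard : ((Finset.univ : Finset (Fin n)).card : ℝ) = n := by
        simp
      have hne : (n : ℝ) ≠ 0 := Nat.cast_ne_zero.mpr hn.ne'
      have : ‖((n : ℂ))⁻¹‖ = (n : ℝ)⁻¹ := by
        simp
      rw [this]
      calc (n : ℝ)⁻¹ * E.nrm (∑ i, fun k => (‖x i k‖ : ℂ))
          ≤ (n : ℝ)⁻¹ * n := by
            apply mul_le_mul_of_nonneg_left _ (by positivity)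
            simpa [hcard] using (hsummem Finset.univ).2
        _ = 1 := by field_simp
    have hynorm : ∀ k, ‖z k‖ ≤ ‖y k‖ := by
      intro k
      have hyk : y k = ((( (n:ℝ)⁻¹ * ∑ i, ‖x i k‖) : ℝ) : ℂ) := by
        simp only [hy_def, Pi.smul_apply, Finset.sum_apply, smul_eq_mul]
        push_cast
        ring
      have hnn : (0:ℝ) ≤ (n:ℝ)⁻¹ * ∑ i, ‖x i k‖ := by
        positivity
      rw [hznorm k, hyk, Complex.norm_real, Real.norm_eq_abs, abs_of_nonneg hnn]
      -- AM-GM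
      have hw : ∑ _i : Fin n, (n:ℝ)⁻¹ = 1 := by
        have hne : (n : ℝ) ≠ 0 := Nat.cast_ne_zero.mpr hn.ne'
        simp [Finset.card_univ]
        field_simp
      have := Real.geom_mean_le_arith_mean_weighted Finset.univ
        (fun _ => (n:ℝ)⁻¹) (fun i => ‖x i k‖)
        (fun i _ => by positivity) hw (fun i _ => norm_nonneg _)
      rw [Real.finset_prod_rpow _ _ (fun i _ => norm_nonneg _) _] at this
      calc r k = (∏ i, ‖x i k‖) ^ ((n : ℝ)⁻¹) := rfl
        _ ≤ ∑ i : Fin n, (n:ℝ)⁻¹ * ‖x i k‖ := this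
        _ = (n:ℝ)⁻¹ * ∑ i, ‖x i k‖ := by rw [Finset.mul_sum]
    have hzmem : E.mem z ∧ E.nrm z ≤ 1 := by
      have := E.solid z y hynorm hymem.1
      exact ⟨this.1, this.2.trans hymem.2⟩
    -- the bound
    have hSum : Summable fun k => ‖α k‖ * ∏ i, ‖x i k‖ := hsum x hmemx
    have htsum : ∑' k, α k * z k ^ n = ((∑' k, ‖α k‖ * ∏ i, ‖x i k‖ : ℝ) : ℂ) := by
      rw [Complex.ofReal_tsum]
      exact tsum_congr hval
    refine ⟨‖∑' k, α k * z k ^ n‖, ⟨z, hzmem.1, hzmem.2, rfl⟩, ?_⟩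
    rw [htsum, Complex.norm_real, Real.norm_eq_abs, abs_of_nonneg (tsum_nonneg fun k =>
      mul_nonneg (norm_nonneg _) (hprod_nonneg k))]
    calc ‖∑' k, α k * ∏ i, x i k‖
        ≤ ∑' k, ‖α k * ∏ i, x i k‖ := by
          apply norm_tsum_le_tsum_norm
          simpa [norm_mul, norm_prod] using hSum
      _ = ∑' k, ‖α k‖ * ∏ i, ‖x i k‖ := by
          simp [norm_mul, norm_prod]
  by_cases hB : BddAbove B
  · obtain ⟨M, hM⟩ := hB
    have hAbdd : BddAbove A := by
      refine ⟨M, fun a ha => ?_⟩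
      obtain ⟨b, hb, hab⟩ := key a ha
      exact hab.trans (hM hb)
    refine le_antisymm ?_ (csSup_le_csSup hAbdd hBne hBA)
    apply csSup_le hAne
    intro a ha
    obtain ⟨b, hb, hab⟩ := key a ha
    exact hab.trans (le_csSup ⟨M, hM⟩ hb)
  · have hA : ¬ BddAbove A := fun h => hB (h.mono hBA)
    rw [Real.sSup_of_not_bddAbove hA, Real.sSup_of_not_bddAbove hB]
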